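/- Let A : ℂ^N → ℂ^N, b ∈ ℂ^N, and P a subspace of ℂ^N spanned by columns p₁,…,p_s. For y ∈ ℂ^N and a polynomial q_{0,j}(t) = ∏_{i=1}^{j}(1 − ω_i t) with all ω_i ≠ 0, set x := q_{0,j}(A)·y. Then the following are equivalent: (A) y ∈ G₀ and ⟨Aᵏ y, p_q⟩ = 0 for all q = 1,…,s and k = 0,…,j+ℓ−1; (B) x ∈ G_j and ⟨Aᵏ q_{0,j}(A) y, p_q⟩ = 0 for all q = 1,…,s and k = 0,…,ℓ−1; where G_j denotes the Sonneveld space of degree j and membership x ∈ G_j is characterized by y ∈ G₀ ∩ K_j^⊥(Aᴴ;P). -/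

import Mathlib

open Finset in
lemma stmt3_rep {V : Type*} [AddCommGroup V] [Module ℂ V]
    (A : Module.End ℂ V) (ω : ℕ → ℂ) (hω : ∀ i, ω i ≠ 0) (j : ℕ) :
    ∃ c : ℕ → ℂ, c j ≠ 0 ∧
      ((List.range j).map (fun i => (1 : Module.End ℂ V) - ω (i + 1) • A)).prod
        = ∑ m ∈ Finset.range (j + 1), c m • A ^ m := by
  induction j with
  | zero =>
    exact ⟨fun _ => 1, one_ne_zero, by simp⟩
  | succ j ih =>
    obtain ⟨c, hcj, hc⟩ := ih
    refine ⟨fun m => (if m < j + 1 then c m else 0)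
        - ω (j + 1) * (if m = 0 then 0 else c (m - 1)), ?_, ?_⟩
    · simp [Nat.succ_ne_zero, mul_ne_zero (hω (j+1)) hcj]
    · rw [List.range_succ, List.map_append, List.prod_append]
      simp only [List.map_cons, List.map_nil, List.prod_cons, List.prod_nil, mul_one]
      rw [hc, mul_sub, mul_one]
      have h1 : (∑ m ∈ range (j + 1), c m • A ^ m) * (ω (j + 1) • A)
          = ω (j + 1) • ∑ m ∈ range (j + 1), c m • A ^ (m + 1) := by
        rw [Finset.sum_mul, Finset.smul_sum]
        refine Finset.sum_congr rfl fun m _ => ?_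
        rw [smul_mul_assoc, mul_smul_comm, pow_succ, smul_comm]
      rw [h1]
      have h2 : ∑ m ∈ range (j + 1 + 1),
          ((if m < j + 1 then c m else 0)
            - ω (j + 1) * (if m = 0 then 0 else c (m - 1))) • A ^ m
          = (∑ m ∈ range (j + 1 + 1), (if m < j + 1 then c m else 0) • A ^ m)
            - ω (j + 1) • ∑ m ∈ range (j + 1 + 1),
                (if m = 0 then 0 else c (m - 1)) • A ^ m := by
        rw [Finset.smul_sum, ← Finset.sum_sub_distrib]
        refine Finset.sum_congr rfl fun m _ => ?_
        rw [sub_smul, smul_smul]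
      rw [h2]
      congr 1
      · rw [Finset.sum_range_succ (n := j + 1), if_neg (lt_irrefl _), zero_smul, add_zero]
        exact (Finset.sum_congr rfl fun m hm => by
          rw [if_pos (Finset.mem_range.mp hm)]).symm
      · congr 1
        rw [Finset.sum_range_succ' (n := j + 1)]
        simp [Finset.sum_range_succ']

/-- Core equivalence in the proof of the general recursion of Sonneveld spaces
(Lemma 2): with `x = q_{0,j}(A) y`, condition (A) `y ∈ G₀ ∧ ⟨Aᵏy, p_q⟩ = 0` for
`k < j + ℓ` is equivalent to (B) `x ∈ G_j ∧ ⟨Aᵏx, p_q⟩ = 0` for `k < ℓ`. -/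
theorem stmt_3 {N s : ℕ} (A : Module.End ℂ (EuclideanSpace ℂ (Fin N)))
    (p : Fin s → EuclideanSpace ℂ (Fin N))
    (ω : ℕ → ℂ) (hω : ∀ i, ω i ≠ 0) (j ℓ : ℕ)
    (G0 Gj : Submodule ℂ (EuclideanSpace ℂ (Fin N)))
    (y x : EuclideanSpace ℂ (Fin N))
    (hx : x = (((List.range j).map
        (fun i => (1 : Module.End ℂ (EuclideanSpace ℂ (Fin N))) - ω (i + 1) • A)).prod) y)
    (hchar : x ∈ Gj ↔
      (y ∈ G0 ∧ ∀ q : Fin s, ∀ k < j, (inner ℂ ((A ^ k) y) (p q) : ℂ) = 0)) :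
    (y ∈ G0 ∧ ∀ q : Fin s, ∀ k < j + ℓ, (inner ℂ ((A ^ k) y) (p q) : ℂ) = 0)
      ↔ (x ∈ Gj ∧ ∀ q : Fin s, ∀ k < ℓ, (inner ℂ ((A ^ k) x) (p q) : ℂ) = 0) := by
  obtain ⟨c, hcj, hc⟩ := stmt3_rep A ω hω j
  -- A^k x as a combination of A^(k+m) y
  have hxk : ∀ k : ℕ, (A ^ k) x = ∑ m ∈ Finset.range (j + 1), c m • (A ^ (k + m)) y := by
    intro k
    rw [hx, hc]
    have : (A ^ k) ((∑ m ∈ Finset.range (j + 1), c m • A ^ m) y)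
        = ((A ^ k) * (∑ m ∈ Finset.range (j + 1), c m • A ^ m)) y := rfl
    rw [this, Finset.mul_sum]
    simp only [mul_smul_comm, ← pow_add]
    rw [LinearMap.sum_apply]
    exact Finset.sum_congr rfl fun m _ => rfl
  have hinner : ∀ k : ℕ, ∀ q : Fin s, (inner ℂ ((A ^ k) x) (p q) : ℂ)
      = ∑ m ∈ Finset.range (j + 1),
          (starRingEnd ℂ) (c m) * (inner ℂ ((A ^ (k + m)) y) (p q) : ℂ) := by
    intro k q
    rw [hxk k, sum_inner]
    exact Finset.sum_congr rfl fun m _ => inner_smul_left _ _ _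
  constructor
  · rintro ⟨hy, hA⟩
    have hxG : x ∈ Gj := hchar.mpr ⟨hy, fun q k hk =>
      hA q k (hk.trans_le (Nat.le_add_right j ℓ))⟩
    refine ⟨hxG, fun q k hk => ?_⟩
    rw [hinner k q]
    refine Finset.sum_eq_zero fun m hm => ?_
    have hm' : m < j + 1 := Finset.mem_range.mp hm
    rw [hA q (k + m) (by omega), mul_zero]
  · rintro ⟨hxG, hB⟩
    obtain ⟨hy, h1⟩ := hchar.mp hxG
    refine ⟨hy, ?_⟩
    have key : ∀ k : ℕ, k < j + ℓ → ∀ q : Fin s, (inner ℂ ((A ^ k) y) (p q) : ℂ) = 0 := by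
      intro k
      induction k using Nat.strong_induction_on with
      | _ k IH =>
        intro hk q
        by_cases hkj : k < j
        · exact h1 q k hkj
        · set t := k - j with ht
          have htk : t + j = k := by omega
          have hB' := hB q t (by omega)
          rw [hinner t q, Finset.sum_range_succ] at hB'
          have hz : ∑ m ∈ Finset.range j,
              (starRingEnd ℂ) (c m) * (inner ℂ ((A ^ (t + m)) y) (p q) : ℂ) = 0 :=
            Finset.sum_eq_zero fun m hm => by
              rw [IH (t + m) (by have := Finset.mem_range.mp hm; omega)
                (by have := Finset.mem_range.mp hm; omega) q, mul_zero]
          rw [hz, zero_add, htk] at hB'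
          exact (mul_eq_zero.mp hB').resolve_left
            (by simpa using hcj)
    exact fun q k hk => key k hk q
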